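/- For every real $M \geq 1$ and every $\beta \geq 0$, the inequality $1-\beta \leq 1 - \left(\frac{\beta}{\beta M + (1-\beta)}\right)^M$ holds, provided $\beta M + (1-\beta) > 0$. -/

import Mathlib

/-- For real `M ≥ 1`, `β ≥ 0` with `βM + (1-β) > 0`,
`1 - β ≤ 1 - (β/(βM + (1-β)))^M`. -/
theorem stmt_2 (M β : ℝ) (hM : 1 ≤ M) (hβ : 0 ≤ β) (hpos : 0 < β * M + (1 - β)) :
    1 - β ≤ 1 - (β / (β * M + (1 - β))) ^ M := by
  have hM0 : (0:ℝ) < M := lt_of_lt_of_le one_pos hM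
  set d : ℝ := β * M + (1 - β) with hd
  have hkey : (β / d) ^ M ≤ β := by
    rcases eq_or_lt_of_le hβ with h0 | hβpos
    · rw [← h0, zero_div, Real.zero_rpow (ne_of_gt hM0)]
    · -- weighted AM-GM : β^((M-1)/M) ≤ 1/M·1 + ((M-1)/M)·β ≤ d
      have hw1 : (0:ℝ) ≤ 1 / M := by positivity
      have hw2 : (0:ℝ) ≤ (M - 1) / M := div_nonneg (by linarith) hM0.le
      have hsum : 1 / M + (M - 1) / M = 1 := by field_simp; ring
      have hgm := Real.geom_mean_le_arith_mean2_weighted hw1 hw2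
        (zero_le_one) hβ hsum
      rw [Real.one_rpow, one_mul] at hgm
      have hdM : d / M ≤ d := by
        rw [div_le_iff₀ hM0]
        nlinarith
      have h1 : β ^ ((M - 1) / M) ≤ d := by
        calc β ^ ((M - 1) / M) ≤ 1 / M * 1 + (M - 1) / M * β := hgm
        _ = d / M := by field_simp [hd]; ring
        _ ≤ d := hdM
      have h2 : β ^ (M - 1) ≤ d ^ M := by
        have := Real.rpow_le_rpow (Real.rpow_nonneg hβ _) h1 hM0.le
        rwa [← Real.rpow_mul hβ, div_mul_cancel₀ _ (ne_of_gt hM0)] at this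
      have hβM1 : (0:ℝ) < β ^ (M - 1) := Real.rpow_pos_of_pos hβpos _
      calc (β / d) ^ M = β ^ M / d ^ M := Real.div_rpow hβ hpos.le M
      _ ≤ β ^ M / β ^ (M - 1) := by
          exact div_le_div_of_nonneg_left (Real.rpow_nonneg hβ _) hβM1 h2
      _ = β := by
          rw [← Real.rpow_sub hβpos]
          norm_num
  linarith
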